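/- Let Λ be an additive subgroup of a real inner product space E, and let s₁, s₂ ∈ Λ be distinct points with s₁ − s₂ ∈ 2Λ (equivalently, (s₁ + s₂)/2 ∈ Λ). Then the Voronoi cells of s₁ and s₂ with respect to Λ are disjoint: there is no point x ∈ E satisfying both ‖x − s₁‖ ≤ ‖x − l‖ for all l ∈ Λ and ‖x − s₂‖ ≤ ‖x − l‖ for all l ∈ Λ. -/

import Mathlib

/-- The parity lemma for Voronoi cells: if `s₁ ≠ s₂` lie in `Λ` and in the same
class modulo `2Λ`, then their Voronoi cells with respect to `Λ` are disjoint. -/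
theorem voronoi_parity_disjoint (E : Type*) [NormedAddCommGroup E] [InnerProductSpace ℝ E]
    (Λ : AddSubgroup E) (s₁ s₂ : E) (h₁ : s₁ ∈ Λ) (h₂ : s₂ ∈ Λ) (hne : s₁ ≠ s₂)
    (hpar : ∃ u ∈ Λ, s₁ - s₂ = 2 • u) :
    ¬ ∃ x : E, (∀ l ∈ Λ, ‖x - s₁‖ ≤ ‖x - l‖) ∧ (∀ l ∈ Λ, ‖x - s₂‖ ≤ ‖x - l‖) := by
  rintro ⟨x, hx₁, hx₂⟩
  obtain ⟨u, hu, hu'⟩ := hpar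
  have hm : s₂ + u ∈ Λ := Λ.add_mem h₂ hu
  have hle₁ := hx₁ _ hm
  have hle₂ := hx₂ _ hm
  set m := s₂ + u with hmdef
  have hab : (x - s₁) + (x - s₂) = 2 • (x - m) := by
    have : s₁ = s₂ + 2 • u := by rw [← hu']; abel
    rw [this, hmdef]
    simp [two_smul]
    abel
  have hab' : (x - s₁) - (x - s₂) = s₂ - s₁ := by abel
  have hpl := parallelogram_law_with_norm ℝ (x - s₁) (x - s₂)
  rw [hab, hab'] at hpl
  have h2 : ‖(2 : ℕ) • (x - m)‖ * ‖(2 : ℕ) • (x - m)‖ = 4 * (‖x - m‖ * ‖x - m‖) := by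
    rw [show ((2:ℕ) • (x - m)) = (2:ℝ) • (x - m) by simp [two_smul], norm_smul]
    norm_num; ring
  rw [sq, sq, sq, sq, h2] at hpl
  have hpos : 0 < ‖s₂ - s₁‖ := by
    simpa using norm_pos_iff.mpr (sub_ne_zero.mpr hne.symm)
  nlinarith [norm_nonneg (x - s₁), norm_nonneg (x - s₂), norm_nonneg (x - m),
    mul_self_le_mul_self (norm_nonneg (x - s₁)) hle₁,
    mul_self_le_mul_self (norm_nonneg (x - s₂)) hle₂]
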